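/- Let τ_i ⊆ ℝ^n be the simplex defined by y_1 = ⋯ = y_{i−1} = 0, y_i ≥ 0, …, y_n ≥ 0, and y_i + ⋯ + y_n ≤ 1 (so τ_i has vertices the origin and the coordinate unit vectors e_j for i ≤ j ≤ n). Then for all x_1,…,x_n ≥ 0, Π_n(x) equals the Minkowski linear combination x_1·τ_1 + x_2·τ_2 + ⋯ + x_n·τ_n. -/
import Mathlib

open Finset

private lemma clamp_mono {d c s t : ℝ} (h : s ≤ t) :
    min (max s d) c ≤ min (max t d) c :=
  min_le_min (max_le_max h le_rfl) le_rfl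

private lemma clamp_sub_symm {a b c d : ℝ} (hab : a ≤ b) (hdc : d ≤ c) :
    min (max b d) c - min (max a d) c = min (max c a) b - min (max d a) b := by
  simp only [min_def, max_def]
  split_ifs <;> linarith

/-- `Π_n(x)` is the Minkowski linear combination `x_1 τ_1 + ⋯ + x_n τ_n`, where `τ_i`
is the simplex `{y : y_1 = ⋯ = y_{i-1} = 0, y_j ≥ 0, ∑_{j ≥ i} y_j ≤ 1}`. -/
theorem pi_polytope_eq_minkowski_sum (n : ℕ) (x : Fin n → ℝ) (hx : ∀ i, 0 ≤ x i) :
    {y : Fin n → ℝ | ∀ i : Fin n, 0 ≤ y i ∧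
        ∑ j ∈ Finset.Iic i, y j ≤ ∑ j ∈ Finset.Iic i, x j} =
      {z : Fin n → ℝ | ∃ y : Fin n → Fin n → ℝ,
        (∀ i : Fin n,
          (∀ j : Fin n, j < i → y i j = 0) ∧ (∀ j, 0 ≤ y i j) ∧ ∑ j, y i j ≤ 1) ∧
        z = ∑ i, x i • y i} := by
  ext z
  simp only [Set.mem_setOf_eq]
  constructor
  · intro hz
    set X : ℕ → ℝ := fun k => ∑ j : Fin n, if (j : ℕ) < k then x j else 0 with hXdef
    set S : ℕ → ℝ := fun k => ∑ j : Fin n, if (j : ℕ) < k then z j else 0 with hSdef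
    have hX0 : X 0 = 0 := by simp [hXdef]
    have hS0 : S 0 = 0 := by simp [hSdef]
    have hXmono : ∀ {k l : ℕ}, k ≤ l → X k ≤ X l := by
      intro k l hkl
      apply Finset.sum_le_sum
      intro j _
      split_ifs with h1 h2
      · exact le_rfl
      · exact absurd (h1.trans_le hkl) h2
      · exact hx j
      · exact le_rfl
    have hSmono : ∀ {k l : ℕ}, k ≤ l → S k ≤ S l := by
      intro k l hkl
      apply Finset.sum_le_sum
      intro j _
      split_ifs with h1 h2
      · exact le_rfl
      · exact absurd (h1.trans_le hkl) h2
      · exact (hz j).1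
      · exact le_rfl
    have hXnn : ∀ k, 0 ≤ X k := fun k => hX0 ▸ hXmono (Nat.zero_le k)
    have hSnn : ∀ k, 0 ≤ S k := fun k => hS0 ▸ hSmono (Nat.zero_le k)
    have hXIic : ∀ i : Fin n, X ((i : ℕ) + 1) = ∑ j ∈ Iic i, x j := by
      intro i
      simp only [hXdef]
      rw [← Finset.sum_filter]
      apply Finset.sum_congr _ (fun _ _ => rfl)
      ext j
      simp only [Finset.mem_filter, Finset.mem_univ, true_and, Finset.mem_Iic, Nat.lt_succ_iff, Fin.le_def]
    have hSIic : ∀ i : Fin n, S ((i : ℕ) + 1) = ∑ j ∈ Iic i, z j := by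
      intro i
      simp only [hSdef]
      rw [← Finset.sum_filter]
      apply Finset.sum_congr _ (fun _ _ => rfl)
      ext j
      simp only [Finset.mem_filter, Finset.mem_univ, true_and, Finset.mem_Iic, Nat.lt_succ_iff, Fin.le_def]
    have hSX : ∀ k, k ≤ n → S k ≤ X k := by
      intro k hk
      cases k with
      | zero => rw [hS0, hX0]
      | succ m =>
        have hm : m < n := hk
        have := (hz ⟨m, hm⟩).2
        rw [← hXIic ⟨m, hm⟩, ← hSIic ⟨m, hm⟩] at this
        exact this
    have hzval : ∀ j : Fin n, S ((j : ℕ) + 1) - S (j : ℕ) = z j := by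
      intro j
      rw [hSdef]
      rw [← Finset.sum_sub_distrib]
      rw [show (∑ k : Fin n, ((if (k : ℕ) < (j : ℕ) + 1 then z k else 0) -
            (if (k : ℕ) < (j : ℕ) then z k else 0))) =
          ∑ k : Fin n, (if k = j then z k else 0) from
        Finset.sum_congr rfl (fun k _ => by
          split_ifs with h1 h2 h3 <;>
            first
            | (exfalso; omega)
            | simp_all)]
      simp
    have hxval : ∀ i : Fin n, X ((i : ℕ) + 1) - X (i : ℕ) = x i := by
      intro i
      rw [hXdef]
      rw [← Finset.sum_sub_distrib]
      rw [show (∑ k : Fin n, ((if (k : ℕ) < (i : ℕ) + 1 then x k else 0) -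
            (if (k : ℕ) < (i : ℕ) then x k else 0))) =
          ∑ k : Fin n, (if k = i then x k else 0) from
        Finset.sum_congr rfl (fun k _ => by
          split_ifs with h1 h2 h3 <;>
            first
            | (exfalso; omega)
            | simp_all)]
      simp
    have tele : ∀ f : ℕ → ℝ, ∑ i : Fin n, (f ((i : ℕ) + 1) - f (i : ℕ)) = f n - f 0 := by
      intro f
      rw [Fin.sum_univ_eq_sum_range (fun k => f (k + 1) - f k)]
      exact Finset.sum_range_sub f n
    set a : Fin n → Fin n → ℝ := fun i j =>
      min (max (X ((i : ℕ) + 1)) (S (j : ℕ))) (S ((j : ℕ) + 1)) -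
        min (max (X (i : ℕ)) (S (j : ℕ))) (S ((j : ℕ) + 1)) with hadef
    have ha_nonneg : ∀ i j, 0 ≤ a i j := by
      intro i j
      have := clamp_mono (d := S (j : ℕ)) (c := S ((j : ℕ) + 1))
        (hXmono (Nat.le_succ (i : ℕ)))
      simpa [hadef] using sub_nonneg.mpr this
    have ha_zero : ∀ i j : Fin n, j < i → a i j = 0 := by
      intro i j hji
      have h1 : S ((j : ℕ) + 1) ≤ X (i : ℕ) :=
        le_trans (hSX _ (by omega)) (hXmono (by omega))
      have h2 : S ((j : ℕ) + 1) ≤ X ((i : ℕ) + 1) := le_trans h1 (hXmono (Nat.le_succ _))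
      have e1 : min (max (X ((i : ℕ) + 1)) (S (j : ℕ))) (S ((j : ℕ) + 1)) = S ((j : ℕ) + 1) :=
        min_eq_right (le_trans h2 (le_max_left _ _))
      have e2 : min (max (X (i : ℕ)) (S (j : ℕ))) (S ((j : ℕ) + 1)) = S ((j : ℕ) + 1) :=
        min_eq_right (le_trans h1 (le_max_left _ _))
      rw [hadef]
      simp only [e1, e2, sub_self]
    have ha_col : ∀ j : Fin n, ∑ i : Fin n, a i j = z j := by
      intro j
      rw [hadef]
      rw [tele (fun k => min (max (X k) (S (j : ℕ))) (S ((j : ℕ) + 1)))]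
      have hfn : min (max (X n) (S (j : ℕ))) (S ((j : ℕ) + 1)) = S ((j : ℕ) + 1) := by
        apply min_eq_right
        exact le_trans (le_trans (hSX _ (by omega)) (hXmono (by omega))) (le_max_left _ _)
      have hf0 : min (max (X 0) (S (j : ℕ))) (S ((j : ℕ) + 1)) = S (j : ℕ) := by
        rw [hX0]
        rw [max_eq_right (hSnn _)]
        exact min_eq_left (hSmono (Nat.le_succ _))
      rw [hfn, hf0, hzval j]
    have ha_row : ∀ i : Fin n, ∑ j : Fin n, a i j ≤ x i := by
      intro i
      have hrw : ∀ j : Fin n, a i j =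
          min (max (S ((j : ℕ) + 1)) (X (i : ℕ))) (X ((i : ℕ) + 1)) -
            min (max (S (j : ℕ)) (X (i : ℕ))) (X ((i : ℕ) + 1)) := by
        intro j
        rw [hadef]
        exact clamp_sub_symm (hXmono (Nat.le_succ _)) (hSmono (Nat.le_succ _))
      rw [Finset.sum_congr rfl (fun j _ => hrw j)]
      rw [tele (fun k => min (max (S k) (X (i : ℕ))) (X ((i : ℕ) + 1)))]
      have hg0 : min (max (S 0) (X (i : ℕ))) (X ((i : ℕ) + 1)) = X (i : ℕ) := by
        rw [hS0, max_eq_right (hXnn _)]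
        exact min_eq_left (hXmono (Nat.le_succ _))
      rw [hg0, ← hxval i]
      have : min (max (S n) (X (i : ℕ))) (X ((i : ℕ) + 1)) ≤ X ((i : ℕ) + 1) :=
        min_le_right _ _
      linarith
    have ha_le : ∀ i j, a i j ≤ x i := by
      intro i j
      calc a i j ≤ ∑ j' : Fin n, a i j' :=
            Finset.single_le_sum (fun j' _ => ha_nonneg i j') (mem_univ j)
        _ ≤ x i := ha_row i
    refine ⟨fun i j => if x i = 0 then 0 else a i j / x i, fun i => ⟨?_, ?_, ?_⟩, ?_⟩
    · intro j hji
      dsimp only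
      split_ifs with h
      · rfl
      · rw [ha_zero i j hji, zero_div]
    · intro j
      dsimp only
      split_ifs with h
      · exact le_rfl
      · exact div_nonneg (ha_nonneg i j) (hx i)
    · by_cases h : x i = 0
      · simp [h]
      · simp only [if_neg h]
        rw [← Finset.sum_div]
        rw [div_le_one (lt_of_le_of_ne (hx i) (Ne.symm h))]
        exact ha_row i
    · funext j
      rw [Finset.sum_apply]
      simp only [Pi.smul_apply, smul_eq_mul]
      have : ∀ i : Fin n, x i * (if x i = 0 then 0 else a i j / x i) = a i j := by
        intro i
        split_ifs with h
        · rw [mul_zero]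
          have h1 : a i j ≤ 0 := h ▸ ha_le i j
          linarith [ha_nonneg i j]
        · field_simp
      rw [Finset.sum_congr rfl (fun i _ => this i), ha_col j]
  · rintro ⟨y, hy, rfl⟩
    intro i
    constructor
    · rw [Finset.sum_apply]
      exact Finset.sum_nonneg fun k _ => by
        simpa using mul_nonneg (hx k) ((hy k).2.1 i)
    · simp only [Finset.sum_apply, Pi.smul_apply, smul_eq_mul]
      rw [Finset.sum_comm]
      have hvan : ∀ k ∈ (univ : Finset (Fin n)), k ∉ Iic i →
          ∑ j ∈ Iic i, x k * y k j = 0 := by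
        intro k _ hk
        apply Finset.sum_eq_zero
        intro j hj
        have hik : i < k := lt_of_not_ge (fun h => hk (mem_Iic.mpr h))
        rw [(hy k).1 j (lt_of_le_of_lt (mem_Iic.mp hj) hik), mul_zero]
      rw [← Finset.sum_subset (Finset.subset_univ (Iic i)) hvan]
      apply Finset.sum_le_sum
      intro k _
      rw [← Finset.mul_sum]
      have h1 : ∑ j ∈ Iic i, y k j ≤ 1 :=
        le_trans (Finset.sum_le_sum_of_subset_of_nonneg (Finset.subset_univ _)
          (fun j _ _ => (hy k).2.1 j)) (hy k).2.2
      calc x k * ∑ j ∈ Iic i, y k j ≤ x k * 1 :=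
            mul_le_mul_of_nonneg_left h1 (hx k)
        _ = x k := mul_one _
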